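/- For α a real number that is not a nonnegative integer, |binom(α, m)| is asymptotic to 1/|Γ(−α)·m^{1+α}| as m → ∞; in particular, for α ∈ [−1, −1/2], one has |binom(α,m)| = O(m^{−1−α}) with absolute implied constant, since Γ(−α) ≥ 1 on that range. -/

import Mathlib

open Filter

/-- The generalized binomial coefficient `binom(α, m) = α(α-1)⋯(α-m+1)/m!` over `ℝ`. -/
noncomputable def rbinom (α : ℝ) (m : ℕ) : ℝ :=
  (∏ j ∈ Finset.range m, (α - j)) / m.factorial

/-- Key step inequality: for `t ≥ 0`, `1 - t/u ≤ (u/v)^t` when `0 < u < v = u + 1`. -/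
lemma rbinom_aux_step {t u : ℝ} (ht : 0 ≤ t) (hu : 0 < u) :
    1 - t / u ≤ (u / (u + 1)) ^ t := by
  have hv : (0 : ℝ) < u + 1 := by linarith
  rw [Real.rpow_def_of_pos (div_pos hu hv)]
  have h1 : Real.log ((u + 1) / u) ≤ (u + 1) / u - 1 :=
    Real.log_le_sub_one_of_pos (div_pos hv hu)
  have h2 : Real.log (u / (u + 1)) = -Real.log ((u + 1) / u) := by
    rw [Real.log_div hu.ne' hv.ne', Real.log_div hv.ne' hu.ne']; ring
  have h3 : -(1 / u) ≤ Real.log (u / (u + 1)) := by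
    rw [h2]
    have : (u + 1) / u - 1 = 1 / u := by field_simp; ring
    linarith
  have h4 : t * (-(1 / u)) ≤ t * Real.log (u / (u + 1)) :=
    mul_le_mul_of_nonneg_left h3 ht
  have h5 := Real.add_one_le_exp (t * Real.log (u / (u + 1)))
  have h6 : 1 - t / u = t * (-(1 / u)) + 1 := by field_simp; ring
  rw [mul_comm (Real.log (u / (u + 1))) t]
  linarith

/-- Induction: `∏_{j<m} (j - α) ≤ (m+1)^{-1-α} · m!` for `α ∈ [-1, -1/2]`. -/
lemma rbinom_aux_prod {α : ℝ} (hα1 : -1 ≤ α) (hα2 : α ≤ -(1 / 2)) :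
    ∀ m : ℕ, (∏ j ∈ Finset.range m, ((j : ℝ) - α)) ≤
      ((m : ℝ) + 1) ^ (-1 - α) * m.factorial := by
  intro m
  induction m with
  | zero => simp
  | succ m ih =>
    rw [Finset.prod_range_succ]
    have hm1 : (0 : ℝ) < (m : ℝ) + 1 := by positivity
    have hm2 : (0 : ℝ) < (m : ℝ) + 2 := by positivity
    have hmα : (0 : ℝ) ≤ (m : ℝ) - α := by
      have : (0 : ℝ) ≤ (m : ℝ) := Nat.cast_nonneg m
      linarith
    have h1 : (∏ j ∈ Finset.range m, ((j : ℝ) - α)) * ((m : ℝ) - α) ≤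
        (((m : ℝ) + 1) ^ (-1 - α) * m.factorial) * ((m : ℝ) - α) :=
      mul_le_mul_of_nonneg_right ih hmα
    refine h1.trans ?_
    -- core inequality: (m+1)^{-1-α} * (m - α) ≤ (m+2)^{-1-α} * (m+1)
    set t : ℝ := 1 + α with ht_def
    have ht : 0 ≤ t := by simp only [ht_def]; linarith
    set u : ℝ := (m : ℝ) + 1 with hu_def
    have hu : 0 < u := hm1
    have hstep : 1 - t / u ≤ (u / (u + 1)) ^ t := rbinom_aux_step ht hu
    have hut : (0 : ℝ) < u ^ t := Real.rpow_pos_of_pos hu t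
    have hvt : (0 : ℝ) < (u + 1) ^ t := Real.rpow_pos_of_pos (by linarith) t
    have hdiv : (u / (u + 1)) ^ t = u ^ t / (u + 1) ^ t :=
      Real.div_rpow hu.le (by linarith : (0:ℝ) ≤ u + 1) t
    have hfrac : ((u - t) / u) ≤ u ^ t / (u + 1) ^ t := by
      rw [← hdiv]
      have : (u - t) / u = 1 - t / u := by field_simp
      linarith
    have hmain : (u - t) * (u + 1) ^ t ≤ u ^ t * u :=
      (div_le_div_iff₀ hu hvt).mp hfrac
    -- translate into rpow with negative exponents
    have hkey : u ^ (-1 - α) * ((m : ℝ) - α) ≤ ((m : ℝ) + 2) ^ (-1 - α) * u := by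
      have hneg : (-1 : ℝ) - α = -t := by simp [ht_def]; ring
      have humt : u - t = (m : ℝ) - α := by simp [hu_def, ht_def]; ring
      have hv2 : (m : ℝ) + 2 = u + 1 := by simp [hu_def]; ring
      rw [hneg, hv2, Real.rpow_neg hu.le, Real.rpow_neg (by linarith : (0:ℝ) ≤ u + 1)]
      rw [← humt]
      rw [inv_mul_eq_div, inv_mul_eq_div, div_le_div_iff₀ hut hvt]
      linarith [hmain]
    have h2 := mul_le_mul_of_nonneg_right hkey
      (by positivity : (0:ℝ) ≤ (m.factorial : ℝ))
    have e1 : (((m + 1 : ℕ) : ℝ) + 1) = (m : ℝ) + 2 := by push_cast; ring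
    have e2 : (((m + 1).factorial : ℝ)) = ((m : ℝ) + 1) * m.factorial := by
      rw [Nat.factorial_succ]; push_cast; ring
    rw [e1, e2]
    calc ((m : ℝ) + 1) ^ (-1 - α) * m.factorial * ((m : ℝ) - α)
        = u ^ (-1 - α) * ((m : ℝ) - α) * m.factorial := by rw [hu_def]; ring
      _ ≤ ((m : ℝ) + 2) ^ (-1 - α) * u * m.factorial := h2
      _ = ((m : ℝ) + 2) ^ (-1 - α) * (((m : ℝ) + 1) * m.factorial) := by rw [hu_def]; ring

/-- For `α` a real number that is not a nonnegative integer, `|binom(α, m)|` is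
asymptotic to `1/|Γ(-α)·m^{1+α}|` as `m → ∞` (i.e., their ratio tends to `1`);
in particular, for `α ∈ [-1, -1/2]` one has `|binom(α, m)| ≤ C·m^{-1-α}` for all
`m ≥ 1`, with an absolute constant `C` (independent of `α`). -/
theorem abs_rbinom_asymptotic :
    (∀ α : ℝ, (¬ ∃ n : ℕ, α = n) →
      Tendsto (fun m : ℕ => |rbinom α m| * |Real.Gamma (-α) * (m : ℝ) ^ (1 + α)|)
        atTop (nhds 1)) ∧
    (∃ C : ℝ, ∀ α ∈ Set.Icc (-1 : ℝ) (-(1 / 2)), ∀ m : ℕ, 1 ≤ m →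
      |rbinom α m| ≤ C * (m : ℝ) ^ (-1 - α)) := by
  constructor
  · -- Part 1: asymptotics via Euler's limit formula for Γ
    intro α hα
    have hne : ∀ n : ℕ, α ≠ n := fun n h => hα ⟨n, h⟩
    have hΓ : Real.Gamma (-α) ≠ 0 := by
      refine Real.Gamma_ne_zero fun n h => hne n ?_
      have := neg_injective h
      simpa using this
    have hΓa : (0 : ℝ) < |Real.Gamma (-α)| := abs_pos.mpr hΓ
    have t1 : Tendsto (fun m : ℕ => Real.GammaSeq (-α) (m - 1)) atTop
        (nhds (Real.Gamma (-α))) :=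
      (Real.GammaSeq_tendsto_Gamma (-α)).comp (tendsto_sub_atTop_nat 1)
    have t2 : Tendsto (fun m : ℕ =>
        |Real.Gamma (-α)| / |Real.GammaSeq (-α) (m - 1)|) atTop (nhds 1) := by
      have := Tendsto.div (tendsto_const_nhds
        (x := |Real.Gamma (-α)|) (f := atTop (α := ℕ))) t1.abs (abs_ne_zero.mpr hΓ)
      simpa [div_self hΓa.ne', Pi.div_def] using this
    have t3 : Tendsto (fun m : ℕ => (((m : ℝ) - 1) / m)) atTop (nhds 1) := by
      have h0 : Tendsto (fun m : ℕ => 1 - 1 / (m : ℝ)) atTop (nhds (1 - 0)) :=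
        tendsto_const_nhds.sub tendsto_one_div_atTop_nhds_zero_nat
      rw [sub_zero] at h0
      refine h0.congr' ?_
      filter_upwards [eventually_ge_atTop 1] with m hm
      have hm0 : (m : ℝ) ≠ 0 := Nat.cast_ne_zero.mpr (by omega)
      field_simp
    have t4 : Tendsto (fun m : ℕ => (((m : ℝ) - 1) / m) ^ (-α)) atTop (nhds 1) := by
      simpa [Real.one_rpow] using t3.rpow_const (Or.inl one_ne_zero)
    have tg : Tendsto (fun m : ℕ =>
        |Real.Gamma (-α)| / |Real.GammaSeq (-α) (m - 1)| *
          (((m : ℝ) - 1) / m) ^ (-α)) atTop (nhds 1) := by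
      simpa using t2.mul t4
    refine tg.congr' ?_
    filter_upwards [eventually_ge_atTop 2] with m hm
    obtain ⟨n, rfl⟩ : ∃ n, m = n + 1 := ⟨m - 1, by omega⟩
    have hn : 1 ≤ n := by omega
    have hx : (0 : ℝ) < (n : ℝ) := by exact_mod_cast hn
    have hy : (0 : ℝ) < (n : ℝ) + 1 := by linarith
    set P : ℝ := ∏ j ∈ Finset.range (n + 1), (-α + (j : ℝ)) with hP_def
    have hP : P ≠ 0 := by
      rw [hP_def]
      refine Finset.prod_ne_zero_iff.mpr fun j _ h => hne j ?_
      linarith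
    have habsP : (0 : ℝ) < |P| := abs_pos.mpr hP
    have hfact : (0 : ℝ) < (n.factorial : ℝ) := by exact_mod_cast n.factorial_pos
    have hfact1 : (0 : ℝ) < ((n + 1).factorial : ℝ) := by exact_mod_cast (n + 1).factorial_pos
    have habs : |rbinom α (n + 1)| = |P| / ((n + 1).factorial : ℝ) := by
      rw [rbinom, abs_div, abs_of_pos hfact1]
      congr 1
      rw [Finset.abs_prod, hP_def, Finset.abs_prod]
      refine Finset.prod_congr rfl fun j _ => ?_
      rw [abs_sub_comm]
      congr 1
      ring
    have hGseq : |Real.GammaSeq (-α) n| = (n : ℝ) ^ (-α) * n.factorial / |P| := by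
      rw [Real.GammaSeq, ← hP_def, abs_div, abs_mul,
        abs_of_pos (Real.rpow_pos_of_pos hx (-α)), abs_of_pos hfact]
    have hsub : (n + 1 : ℕ) - 1 = n := by omega
    have hxa : (0 : ℝ) < (n : ℝ) ^ (-α) := Real.rpow_pos_of_pos hx (-α)
    have hya : (0 : ℝ) < ((n : ℝ) + 1) ^ α := Real.rpow_pos_of_pos hy α
    have hy1a : ((n : ℝ) + 1) ^ (1 + α) = ((n : ℝ) + 1) * ((n : ℝ) + 1) ^ α := by
      rw [Real.rpow_add hy, Real.rpow_one]
    have hdivpow : ((n : ℝ) / ((n : ℝ) + 1)) ^ (-α) =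
        (n : ℝ) ^ (-α) * ((n : ℝ) + 1) ^ α := by
      rw [Real.div_rpow hx.le hy.le (-α), Real.rpow_neg hy.le α]; field_simp
    have hcast : ((n + 1 : ℕ) : ℝ) = (n : ℝ) + 1 := by push_cast; ring
    have hfs : ((n + 1).factorial : ℝ) = ((n : ℝ) + 1) * n.factorial := by
      rw [Nat.factorial_succ]; push_cast; ring
    -- now prove the equality
    show |Real.Gamma (-α)| / |Real.GammaSeq (-α) ((n + 1) - 1)| *
        ((((n + 1 : ℕ) : ℝ) - 1) / ((n + 1 : ℕ) : ℝ)) ^ (-α) =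
      |rbinom α (n + 1)| * |Real.Gamma (-α) * ((n + 1 : ℕ) : ℝ) ^ (1 + α)|
    rw [hsub, hGseq, habs, abs_mul, hcast]
    rw [show ((n : ℝ) + 1 - 1) = (n : ℝ) by ring]
    rw [abs_of_pos (Real.rpow_pos_of_pos hy (1 + α)), hy1a, hdivpow, hfs]
    field_simp
  · -- Part 2: uniform bound with C = 1
    refine ⟨1, fun α hα m hm => ?_⟩
    obtain ⟨hα1, hα2⟩ := hα
    have hm0 : (0 : ℝ) < (m : ℝ) := by exact_mod_cast hm
    have hfact : (0 : ℝ) < (m.factorial : ℝ) := by exact_mod_cast m.factorial_pos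
    have habs : |rbinom α m| =
        (∏ j ∈ Finset.range m, ((j : ℝ) - α)) / m.factorial := by
      rw [rbinom, abs_div, abs_of_pos hfact, Finset.abs_prod]
      congr 1
      refine Finset.prod_congr rfl fun j _ => ?_
      have hj : (0 : ℝ) ≤ (j : ℝ) := Nat.cast_nonneg j
      rw [abs_of_nonpos (by linarith : α - (j : ℝ) ≤ 0)]
      ring
    rw [habs, one_mul, div_le_iff₀ hfact]
    refine (rbinom_aux_prod hα1 hα2 m).trans ?_
    refine mul_le_mul_of_nonneg_right ?_ hfact.le
    exact Real.rpow_le_rpow_of_nonpos hm0 (by linarith) (by linarith)
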